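/- arXiv:2206.12532 — 4 statements merged into one kernel-verified Lean document; each statement's English description precedes it below -/
import Mathlib

section
/- If a causal score function θ has a valid effect ordering interpretation with respect to a causal effect function β over a finite set of feature values (i.e., θ(x_i) > θ(x_j) if and only if β(x_i) > β(x_j) for all i, j), then for every threshold τ there exists a threshold τ̃ such that θ(x) > τ̃ if and only if β(x) > τ, for all feature values x in the set. -/
/-- Effect ordering implies effect classification for every threshold. -/
theorem eo_implies_ec {X : Type*} [Fintype X] [Nonempty X] (θ β : X → ℝ)
    (hEO : ∀ xi xj : X, θ xi > θ xj ↔ β xi > β xj) :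
    ∀ τ : ℝ, ∃ τt : ℝ, ∀ x : X, θ x > τt ↔ β x > τ := by
  intro τ
  set S : Finset X := Finset.univ.filter (fun x => β x ≤ τ) with hS
  by_cases hne : S.Nonempty
  · refine ⟨S.sup' hne θ, fun x => ?_⟩
    constructor
    · intro hx
      by_contra hb
      push_neg at hb
      have hxS : x ∈ S := by simp [hS, hb]
      exact absurd (Finset.le_sup' θ hxS) (not_le.mpr hx)
    · intro hx
      rw [gt_iff_lt, Finset.sup'_lt_iff]
      intro y hy
      have hby : β y ≤ τ := by simpa [hS] using hy
      exact (hEO x y).mpr (lt_of_le_of_lt hby hx)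
  · -- all x have β x > τ
    refine ⟨(Finset.univ.inf' Finset.univ_nonempty θ) - 1, fun x => ?_⟩
    have hbx : β x > τ := by
      by_contra hb
      exact hne ⟨x, by simp [hS, not_lt.mp hb]⟩
    constructor
    · intro _; exact hbx
    · intro _
      have := Finset.inf'_le θ (Finset.mem_univ x)
      linarith
end

section
/- For a standard normal variable ε, the variance of the truncated variable Var(ε | ε > −ψ) is a strictly increasing function of ψ, and by symmetry Var(ε | ε ≤ −ψ) = Var(ε | ε > ψ). Consequently, the function D(ψ) = Var(ε | ε > −ψ) − Var(ε | ε ≤ −ψ) satisfies D(0) = 0, D(ψ) > 0 for ψ > 0, and D(ψ) < 0 for ψ < 0. -/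
open MeasureTheory ProbabilityTheory Real Filter Set
open scoped NNReal ENNReal

/-- Conditional mean of a standard normal restricted to a set. -/
noncomputable def gaussCondMean (s : Set ℝ) : ℝ :=
  (∫ x in s, x ∂(gaussianReal 0 1)) / ((gaussianReal 0 1) s).toReal

/-- Conditional variance of a standard normal restricted to a set. -/
noncomputable def gaussCondVar (s : Set ℝ) : ℝ :=
  (∫ x in s, x ^ 2 ∂(gaussianReal 0 1)) / ((gaussianReal 0 1) s).toReal -
    (gaussCondMean s) ^ 2

noncomputable def phi (x : ℝ) : ℝ := (Real.sqrt (2 * Real.pi))⁻¹ * Real.exp (-x ^ 2 / 2)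

lemma phi_eq : phi = gaussianPDFReal 0 1 := by
  funext x
  simp [phi, gaussianPDFReal]

lemma phi_pos (x : ℝ) : 0 < phi x := by
  have h : 0 < Real.sqrt (2 * Real.pi) := Real.sqrt_pos.2 (by positivity)
  unfold phi
  positivity

lemma continuous_phi : Continuous phi := by
  unfold phi; fun_prop

lemma hasDerivAt_phi (x : ℝ) : HasDerivAt phi (-x * phi x) x := by
  have h1 : HasDerivAt (fun x : ℝ => -x ^ 2 / 2) (-x) x := by
    have := ((hasDerivAt_pow 2 x).neg).div_const 2
    simpa using this.congr_deriv (by ring)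
  have h2 : HasDerivAt phi ((Real.sqrt (2 * Real.pi))⁻¹ * (Real.exp (-x ^ 2 / 2) * -x)) x :=
    (h1.exp).const_mul (Real.sqrt (2 * Real.pi))⁻¹
  have he : -x * phi x = (Real.sqrt (2 * Real.pi))⁻¹ * (Real.exp (-x ^ 2 / 2) * -x) := by
    simp only [phi]; ring
  rw [he]; exact h2

lemma integrable_phi : Integrable phi := by
  rw [phi_eq]; exact integrable_gaussianPDFReal 0 1

lemma integrable_xphi : Integrable (fun x : ℝ => x * phi x) := by
  have h := (integrable_mul_exp_neg_mul_sq (by norm_num : (0:ℝ) < 1/2)).const_mul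
    (Real.sqrt (2 * Real.pi))⁻¹
  refine h.congr ?_
  filter_upwards with x
  simp only [phi]
  ring_nf

lemma integrable_x2phi : Integrable (fun x : ℝ => x ^ 2 * phi x) := by
  have h := (integrable_rpow_mul_exp_neg_mul_sq (by norm_num : (0:ℝ) < 1/2)
    (by norm_num : (-1:ℝ) < 2)).const_mul (Real.sqrt (2 * Real.pi))⁻¹
  refine h.congr ?_
  filter_upwards with x
  have : x ^ (2:ℝ) = x ^ 2 := by
    rw [show ((2:ℝ) = ((2:ℕ):ℝ)) by norm_num, Real.rpow_natCast]
  simp only [phi, this]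
  ring_nf

noncomputable def QQ (t : ℝ) : ℝ := ∫ x in Set.Ioi t, phi x

lemma Q_pos (t : ℝ) : 0 < QQ t := by
  rw [QQ, MeasureTheory.setIntegral_pos_iff_support_of_nonneg_ae]
  · have : (Function.support phi) = Set.univ := by
      ext x; simp [Function.support, (phi_pos x).ne']
    rw [this]
    simpa using measure_Ioi_pos.2 (by simp) -- might fail
  · exact ae_of_all _ fun x => (phi_pos x).le
  · exact integrable_phi.integrableOn

lemma phi_even (x : ℝ) : phi (-x) = phi x := by simp [phi]

lemma int_phi_total : ∫ x, phi x = 1 := by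
  rw [phi_eq]; exact integral_gaussianPDFReal_eq_one 0 (by norm_num)

lemma Q_repr (t : ℝ) : QQ t = 1 - ∫ x in Set.Iic t, phi x := by
  have := MeasureTheory.integral_add_compl (measurableSet_Iic (a := t)) integrable_phi
  rw [Set.compl_Iic] at this
  rw [QQ, ← int_phi_total]
  linarith [this]

lemma hasDerivAt_Q (t : ℝ) : HasDerivAt QQ (-phi t) t := by
  have key : ∀ u : ℝ, QQ u = QQ 0 - ∫ x in (0:ℝ)..u, phi x := by
    intro u
    have h := intervalIntegral.integral_Iic_sub_Iic (f := phi) (μ := volume) (a := (0:ℝ)) (b := u)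
      integrable_phi.integrableOn integrable_phi.integrableOn
    have h1 := Q_repr u
    have h2 := Q_repr 0
    rw [← h]
    linarith
  have h1 : HasDerivAt (fun u => ∫ x in (0:ℝ)..u, phi x) (phi t) t :=
    intervalIntegral.integral_hasDerivAt_right
      (continuous_phi.intervalIntegrable _ _)
      (continuous_phi.stronglyMeasurableAtFilter _ _)
      continuous_phi.continuousAt
  have h2 : HasDerivAt (fun u => QQ 0 - ∫ x in (0:ℝ)..u, phi x) (-phi t) t :=
    (h1.const_sub (QQ 0)).congr_deriv (by ring)
  exact h2.congr_of_eventuallyEq (Filter.Eventually.of_forall key)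

lemma Q_zero : QQ 0 = 1/2 := by
  have h1 : ∫ x in Set.Iic (0:ℝ), phi x = QQ 0 := by
    calc ∫ x in Set.Iic (0:ℝ), phi x = ∫ x in Set.Iic (0:ℝ), phi (-x) := by
          simp only [phi_even]
      _ = ∫ x in Set.Ioi (-(0:ℝ)), phi x := integral_comp_neg_Iic 0 phi
      _ = QQ 0 := by rw [neg_zero]; rfl
  have h2 := Q_repr 0
  linarith

lemma tendsto_phi_atTop : Tendsto phi atTop (nhds 0) := by
  have h1 : Tendsto (fun x : ℝ => -x ^ 2 / 2) atTop atBot := by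
    apply Tendsto.atBot_div_const (by norm_num)
    exact tendsto_neg_atBot_iff.2 (tendsto_pow_atTop (by norm_num))
  have h2 : Tendsto (fun x : ℝ => Real.exp (-x ^ 2 / 2)) atTop (nhds 0) :=
    Real.tendsto_exp_atBot.comp h1
  have h3 := h2.const_mul (Real.sqrt (2 * Real.pi))⁻¹
  rw [mul_zero] at h3
  exact h3

lemma tendsto_xphi_atTop : Tendsto (fun x : ℝ => x * phi x) atTop (nhds 0) := by
  have hC : (0:ℝ) < (Real.sqrt (2 * Real.pi))⁻¹ := by
    have : 0 < Real.sqrt (2 * Real.pi) := Real.sqrt_pos.2 (by positivity)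
    positivity
  have key : Tendsto (fun x : ℝ => x * Real.exp (-x ^ 2 / 2)) atTop (nhds 0) := by
    apply squeeze_zero' (g := fun x => Real.exp (-x))
    · filter_upwards [eventually_ge_atTop (0:ℝ)] with x hx
      positivity
    · filter_upwards [eventually_ge_atTop (4:ℝ)] with x hx
      have hx0 : (0:ℝ) < x := by linarith
      calc x * Real.exp (-x ^ 2 / 2) ≤ Real.exp x * Real.exp (-x ^ 2 / 2) := by
            apply mul_le_mul_of_nonneg_right (by linarith [Real.add_one_le_exp x]) (Real.exp_pos _).le
        _ = Real.exp (x - x ^ 2 / 2) := by rw [← Real.exp_add]; ring_nf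
        _ ≤ Real.exp (-x) := by
            apply Real.exp_le_exp.2
            nlinarith
    · exact Real.tendsto_exp_neg_atTop_nhds_zero
  have := key.const_mul (Real.sqrt (2 * Real.pi))⁻¹
  simp only [mul_zero] at this
  refine this.congr fun x => ?_
  simp only [phi]; ring

lemma int_xphi_Ioi (t : ℝ) : ∫ x in Set.Ioi t, x * phi x = phi t := by
  have h := MeasureTheory.integral_Ioi_of_hasDerivAt_of_tendsto
    (f := fun x => -phi x) (f' := fun x => x * phi x) (a := t)
    (continuous_phi.neg.continuousWithinAt)
    (fun x _ => (hasDerivAt_phi x).neg.congr_deriv (by ring))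
    (integrable_xphi.integrableOn)
    (by simpa using tendsto_phi_atTop.neg)
  simpa using h

lemma int_x2phi_Ioi (t : ℝ) : ∫ x in Set.Ioi t, x ^ 2 * phi x = t * phi t + QQ t := by
  have hderiv : ∀ x ∈ Set.Ici t, HasDerivAt (fun x : ℝ => -(x * phi x))
      (x ^ 2 * phi x - phi x) x := by
    intro x _
    have h1 := ((hasDerivAt_id x).mul (hasDerivAt_phi x)).neg
    exact h1.congr_deriv (by simp only [id_eq]; ring)
  have hint : MeasureTheory.IntegrableOn (fun x : ℝ => x ^ 2 * phi x - phi x) (Set.Ioi t) :=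
    (integrable_x2phi.sub integrable_phi).integrableOn
  have hlim : Tendsto (fun x : ℝ => -(x * phi x)) atTop (nhds 0) := by
    simpa using tendsto_xphi_atTop.neg
  have h := MeasureTheory.integral_Ioi_of_hasDerivAt_of_tendsto
    ((continuous_id.mul continuous_phi).neg.continuousWithinAt)
    (fun x hx => hderiv x (Set.mem_Ici.2 (le_of_lt hx))) hint hlim
  have h2 : ∫ x in Set.Ioi t, (x ^ 2 * phi x - phi x) = t * phi t := by simpa using h
  have h3 : ∫ x in Set.Ioi t, (x ^ 2 * phi x - phi x) =
      (∫ x in Set.Ioi t, x ^ 2 * phi x) - ∫ x in Set.Ioi t, phi x :=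
    MeasureTheory.integral_sub integrable_x2phi.integrableOn integrable_phi.integrableOn
  have : QQ t = ∫ x in Set.Ioi t, phi x := rfl
  linarith

lemma tQ_le (t : ℝ) (ht : 0 < t) : t * QQ t ≤ phi t := by
  have h : ∫ x in Set.Ioi t, t * phi x ≤ ∫ x in Set.Ioi t, x * phi x := by
    apply MeasureTheory.setIntegral_mono_on
      ((integrable_phi.integrableOn).const_mul t)
      (integrable_xphi.integrableOn) measurableSet_Ioi
    intro x hx
    have : t ≤ x := le_of_lt hx
    nlinarith [phi_pos x]
  rw [int_xphi_Ioi, integral_const_mul] at h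
  exact h

lemma tendsto_Q_atTop : Tendsto QQ atTop (nhds 0) := by
  apply squeeze_zero' (f := QQ) (g := phi) (t₀ := atTop)
  · exact Filter.Eventually.of_forall fun x => (Q_pos x).le
  · filter_upwards [eventually_ge_atTop (1:ℝ)] with x hx
    have h := tQ_le x (by linarith)
    have hq := Q_pos x
    nlinarith
  · exact tendsto_phi_atTop

lemma gaussianReal_set_integral (s : Set ℝ) (hs : MeasurableSet s) (g : ℝ → ℝ) :
    ∫ x in s, g x ∂(gaussianReal 0 1) = ∫ x in s, phi x * g x := by
  rw [gaussianReal_of_var_ne_zero 0 (by norm_num : (1:ℝ≥0) ≠ 0)]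
  have hpdf : (gaussianPDF 0 1) = fun x => ((Real.toNNReal (gaussianPDFReal 0 1 x) : ℝ≥0) : ℝ≥0∞) := by
    funext x; rfl
  rw [hpdf]
  rw [setIntegral_withDensity_eq_setIntegral_smul
    ((measurable_gaussianPDFReal 0 1).real_toNNReal) g hs]
  apply MeasureTheory.setIntegral_congr_fun hs
  intro x _
  simp only [NNReal.smul_def, smul_eq_mul]
  rw [Real.coe_toNNReal _ (gaussianPDFReal_nonneg 0 1 x), ← phi_eq]

lemma gauss_meas (s : Set ℝ) (hs : MeasurableSet s) :
    ((gaussianReal 0 1) s).toReal = ∫ x in s, phi x := by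
  rw [gaussianReal_apply_eq_integral 0 (by norm_num : (1:ℝ≥0) ≠ 0) s]
  rw [ENNReal.toReal_ofReal]
  · rw [← phi_eq]
  · rw [← phi_eq]  -- might not match; integrand is gaussianPDFReal
    exact MeasureTheory.setIntegral_nonneg hs fun x _ => (phi_pos x).le

lemma meas_Ioi (t : ℝ) : ((gaussianReal 0 1) (Set.Ioi t)).toReal = QQ t := by
  rw [gauss_meas _ measurableSet_Ioi]; rfl

lemma int_id_Ioi (t : ℝ) : ∫ x in Set.Ioi t, x ∂(gaussianReal 0 1) = phi t := by
  rw [gaussianReal_set_integral _ measurableSet_Ioi]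
  rw [← int_xphi_Ioi t]
  apply MeasureTheory.setIntegral_congr_fun measurableSet_Ioi
  intro x _; ring

lemma int_sq_Ioi (t : ℝ) : ∫ x in Set.Ioi t, x ^ 2 ∂(gaussianReal 0 1) = t * phi t + QQ t := by
  rw [gaussianReal_set_integral _ measurableSet_Ioi]
  rw [← int_x2phi_Ioi t]
  apply MeasureTheory.setIntegral_congr_fun measurableSet_Ioi
  intro x _; ring

-- reflection lemmas for Iic (-t)
lemma int_phi_Iic (t : ℝ) : ∫ x in Set.Iic (-t), phi x = QQ t := by
  have h : ∫ x in Set.Iic (-t), phi x = ∫ x in Set.Iic (-t), phi (-x) := by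
    simp only [phi_even]
  rw [h, integral_comp_neg_Iic (-t) phi, neg_neg]; rfl

lemma meas_Iic (t : ℝ) : ((gaussianReal 0 1) (Set.Iic (-t))).toReal = QQ t := by
  rw [gauss_meas _ measurableSet_Iic, int_phi_Iic]

lemma int_id_Iic (t : ℝ) : ∫ x in Set.Iic (-t), x ∂(gaussianReal 0 1) = -phi t := by
  rw [gaussianReal_set_integral _ measurableSet_Iic]
  have h : ∀ x : ℝ, phi x * x = -((fun y => y * phi y) (-x)) := by
    intro x; show phi x * x = -((-x) * phi (-x)); rw [phi_even]; ring
  calc ∫ x in Set.Iic (-t), phi x * x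
      = ∫ x in Set.Iic (-t), -((fun y => y * phi y) (-x)) := by
        apply MeasureTheory.setIntegral_congr_fun measurableSet_Iic
        intro x _; exact h x
    _ = -∫ x in Set.Iic (-t), (fun y => y * phi y) (-x) := by rw [MeasureTheory.integral_neg]
    _ = -∫ x in Set.Ioi t, x * phi x := by rw [integral_comp_neg_Iic (-t) (fun y => y * phi y), neg_neg]
    _ = -phi t := by rw [int_xphi_Ioi]

lemma int_sq_Iic (t : ℝ) : ∫ x in Set.Iic (-t), x ^ 2 ∂(gaussianReal 0 1) = t * phi t + QQ t := by
  rw [gaussianReal_set_integral _ measurableSet_Iic]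
  calc ∫ x in Set.Iic (-t), phi x * x ^ 2
      = ∫ x in Set.Iic (-t), (fun y => y ^ 2 * phi y) (-x) := by
        apply MeasureTheory.setIntegral_congr_fun measurableSet_Iic
        intro x _; show phi x * x ^ 2 = (-x) ^ 2 * phi (-x); rw [phi_even]; ring
    _ = ∫ x in Set.Ioi t, x ^ 2 * phi x := by rw [integral_comp_neg_Iic (-t) (fun y => y ^ 2 * phi y), neg_neg]
    _ = t * phi t + QQ t := by rw [int_x2phi_Ioi]

noncomputable def qf (t : ℝ) : ℝ := Real.sqrt (t ^ 2 + 4)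
noncomputable def sf (t : ℝ) : ℝ := Real.sqrt (t ^ 2 + 8)
noncomputable def cf (t : ℝ) : ℝ := 2 / (t + qf t)

lemma q_pos (t : ℝ) : 0 < qf t := Real.sqrt_pos.2 (by positivity)
lemma s_pos (t : ℝ) : 0 < sf t := Real.sqrt_pos.2 (by positivity)
lemma q_sq (t : ℝ) : qf t ^ 2 = t ^ 2 + 4 := Real.sq_sqrt (by positivity)
lemma s_sq (t : ℝ) : sf t ^ 2 = t ^ 2 + 8 := Real.sq_sqrt (by positivity)

lemma abs_lt_q (t : ℝ) : |t| < qf t := by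
  have h : Real.sqrt (t ^ 2) < qf t := Real.sqrt_lt_sqrt (sq_nonneg t) (by linarith)
  rwa [Real.sqrt_sq_eq_abs] at h

lemma t_lt_q (t : ℝ) : t < qf t := lt_of_le_of_lt (le_abs_self t) (abs_lt_q t)
lemma tq_pos (t : ℝ) : 0 < t + qf t := by
  have := (abs_lt_q t); have := neg_abs_le t; linarith
lemma abs_lt_s (t : ℝ) : |t| < sf t := by
  have h : Real.sqrt (t ^ 2) < sf t := Real.sqrt_lt_sqrt (sq_nonneg t) (by linarith)
  rwa [Real.sqrt_sq_eq_abs] at h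
lemma t_lt_s (t : ℝ) : t < sf t := lt_of_le_of_lt (le_abs_self t) (abs_lt_s t)
lemma ts_pos (t : ℝ) : 0 < t + sf t := by
  have := (abs_lt_s t); have := neg_abs_le t; linarith

lemma cf_pos (t : ℝ) : 0 < cf t := div_pos (by norm_num) (tq_pos t)
lemma cf_le_one {t : ℝ} (ht : 0 ≤ t) : cf t ≤ 1 := by
  rw [cf, div_le_one (tq_pos t)]
  have : (2:ℝ) ≤ qf t := by
    have : Real.sqrt 4 ≤ qf t := Real.sqrt_le_sqrt (by nlinarith)
    rwa [show (4:ℝ) = 2^2 by norm_num, Real.sqrt_sq (by norm_num)] at this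
  linarith

lemma hasDerivAt_qf (t : ℝ) : HasDerivAt qf (t / qf t) t := by
  have h1 : HasDerivAt (fun t : ℝ => t ^ 2 + 4) (2 * t) t := by
    simpa using ((hasDerivAt_pow 2 t).add_const 4)
  have h2 := (Real.hasDerivAt_sqrt (by positivity : t ^ 2 + 4 ≠ 0)).comp t h1
  have := q_pos t
  exact h2.congr_deriv (by rw [show Real.sqrt (t^2+4) = qf t from rfl]; field_simp)

lemma hasDerivAt_sf (t : ℝ) : HasDerivAt sf (t / sf t) t := by
  have h1 : HasDerivAt (fun t : ℝ => t ^ 2 + 8) (2 * t) t := by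
    simpa using ((hasDerivAt_pow 2 t).add_const 8)
  have h2 := (Real.hasDerivAt_sqrt (by positivity : t ^ 2 + 8 ≠ 0)).comp t h1
  have := s_pos t
  exact h2.congr_deriv (by rw [show Real.sqrt (t^2+8) = sf t from rfl]; field_simp)

lemma hasDerivAt_cf (t : ℝ) :
    HasDerivAt cf (-(2 * (1 + t / qf t)) / (t + qf t) ^ 2) t := by
  have h1 : HasDerivAt (fun t : ℝ => t + qf t) (1 + t / qf t) t :=
    (hasDerivAt_id t).add (hasDerivAt_qf t)
  have h2 := (hasDerivAt_const t (2:ℝ)).div h1 (tq_pos t).ne'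
  exact h2.congr_deriv (by ring)

noncomputable def gK (t : ℝ) : ℝ := phi t * cf t - QQ t

lemma hasDerivAt_gK (t : ℝ) :
    HasDerivAt gK (phi t * ((t ^ 2 + 2 - qf t * t) / (qf t * (t + qf t)))) t := by
  have h1 := ((hasDerivAt_phi t).mul (hasDerivAt_cf t)).sub (hasDerivAt_Q t)
  refine h1.congr_deriv ?_
  have hq := (q_pos t).ne'
  have htq := (tq_pos t).ne'
  have hq2 := q_sq t
  have e1 : -(2 * (1 + t / qf t)) / (t + qf t) ^ 2 = -2 / (qf t * (t + qf t)) := by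
    field_simp; ring
  have e2 : t ^ 2 + 2 - qf t * t = qf t ^ 2 - 2 - qf t * t := by linarith [q_sq t]
  rw [e1, e2, show cf t = 2 / (t + qf t) from rfl]
  field_simp
  ring

lemma strictMono_gK : StrictMono gK := by
  apply strictMono_of_hasDerivAt_pos hasDerivAt_gK  -- maybe name differs
  intro t
  have hq := q_pos t
  have htq := tq_pos t
  have hnum : 0 < t ^ 2 + 2 - qf t * t := by
    rcases le_or_gt t 0 with ht | ht
    · nlinarith
    · nlinarith [q_sq t, sq_nonneg (qf t - t)]
  have := phi_pos t
  positivity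

lemma tendsto_gK_atTop : Tendsto gK atTop (nhds 0) := by
  have h1 : Tendsto (fun t => phi t * cf t) atTop (nhds 0) := by
    apply squeeze_zero' (g := phi)
    · filter_upwards with t; exact (mul_pos (phi_pos t) (cf_pos t)).le
    · filter_upwards [eventually_ge_atTop (0:ℝ)] with t ht
      nlinarith [phi_pos t, cf_le_one ht, cf_pos t]
    · exact tendsto_phi_atTop
  simpa [show gK = fun t => phi t * cf t - QQ t from rfl] using h1.sub tendsto_Q_atTop

lemma phiC_lt_Q (t : ℝ) : phi t * cf t < QQ t := by
  have h1 : gK t < gK (t + 1) := strictMono_gK (by linarith)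
  have h2 : gK (t + 1) ≤ 0 := strictMono_gK.monotone.ge_of_tendsto tendsto_gK_atTop (t + 1)
  have : gK t < 0 := lt_of_lt_of_le h1 h2
  simpa [gK, sub_neg] using this

noncomputable def gB (t : ℝ) : ℝ := 4 * phi t - (3 * t + sf t) * QQ t

lemma hasDerivAt_gB (t : ℝ) :
    HasDerivAt gB (phi t * (sf t - t) - (3 + t / sf t) * QQ t) t := by
  have h1 : HasDerivAt (fun t : ℝ => 3 * t + sf t) (3 + t / sf t) t := by
    exact (((hasDerivAt_id' t).const_mul 3).add (hasDerivAt_sf t)).congr_deriv (by ring)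
  have h2 := ((hasDerivAt_phi t).const_mul 4).sub (h1.mul (hasDerivAt_Q t))
  refine h2.congr_deriv ?_
  ring

lemma key_sq (t : ℝ) : 4 * sf t * qf t < 3 * sf t ^ 2 + t ^ 2 := by
  have hs := s_pos t
  have hq := q_pos t
  have expand : (3 * sf t ^ 2 + t ^ 2) ^ 2 - (4 * sf t * qf t) ^ 2 = 64 := by
    linear_combination (9 * (sf t ^ 2 + t ^ 2 + 8) + 6 * t ^ 2 - 16 * qf t ^ 2) * (s_sq t)
      - (16 * (t ^ 2 + 8)) * (q_sq t)
  have h2 : 0 ≤ 4 * sf t * qf t := by positivity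
  have h3 : 0 < 3 * sf t ^ 2 + t ^ 2 := by positivity
  nlinarith [expand, h2, h3]

lemma E2_neg (t : ℝ) : (sf t - t) - (3 + t / sf t) * cf t < 0 := by
  have hs := s_pos t
  have hq := q_pos t
  have hts := ts_pos t
  have htq := tq_pos t
  have h8 : (sf t - t) * (sf t + t) = 8 := by nlinarith [s_sq t]
  have key := key_sq t
  have hgoal : (sf t - t) * (sf t * (t + qf t)) < 2 * (3 * sf t + t) := by
    have hmul : ((sf t - t) * (sf t * (t + qf t))) * (sf t + t) < (2 * (3 * sf t + t)) * (sf t + t) := by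
      have hL : ((sf t - t) * (sf t * (t + qf t))) * (sf t + t) = 8 * (sf t * (t + qf t)) := by
        linear_combination (sf t * (t + qf t)) * h8
      rw [hL]
      nlinarith [key, s_sq t]
    exact lt_of_mul_lt_mul_right hmul (by linarith : (0:ℝ) ≤ sf t + t)
  have hcf : (3 + t / sf t) * cf t = 2 * (3 * sf t + t) / (sf t * (t + qf t)) := by
    rw [show cf t = 2 / (t + qf t) from rfl]
    field_simp
  rw [hcf]
  rw [sub_neg]
  rw [lt_div_iff₀ (by positivity)]
  linarith [hgoal]

lemma strictAnti_gB : StrictAnti gB := by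
  apply strictAnti_of_hasDerivAt_neg hasDerivAt_gB
  intro t
  have h1 : (3 + t / sf t) * (phi t * cf t) < (3 + t / sf t) * QQ t := by
    apply mul_lt_mul_of_pos_left (phiC_lt_Q t)
    have := abs_lt_s t
    have h2 : -1 < t / sf t := by
      rw [neg_lt, ← neg_div, div_lt_one (s_pos t)]
      linarith [neg_abs_le t]
    linarith
  have h2 : phi t * ((sf t - t) - (3 + t / sf t) * cf t) < 0 :=
    mul_neg_of_pos_of_neg (phi_pos t) (E2_neg t)
  nlinarith [h1, h2]

lemma s_le (t : ℝ) (ht : 0 ≤ t) : sf t ≤ t + 3 := by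
  have h : sf t ^ 2 ≤ (t + 3) ^ 2 := by rw [s_sq]; nlinarith
  nlinarith [s_pos t]

lemma tendsto_gB_atTop : Tendsto gB atTop (nhds 0) := by
  have h1 : Tendsto (fun t => (3 * t + sf t) * QQ t) atTop (nhds 0) := by
    apply squeeze_zero' (g := fun t => 4 * phi t + 3 * QQ t)
    · filter_upwards [eventually_ge_atTop (0:ℝ)] with t ht
      have := Q_pos t
      have := s_pos t
      positivity
    · filter_upwards [eventually_ge_atTop (1:ℝ)] with t ht
      have h2 := tQ_le t (by linarith)
      have h3 := s_le t (by linarith)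
      have := Q_pos t
      nlinarith
    · have := (tendsto_phi_atTop.const_mul (4:ℝ)).add (tendsto_Q_atTop.const_mul (3:ℝ))
      simpa using this
  have := (tendsto_phi_atTop.const_mul (4:ℝ)).sub h1
  simpa [show gB = fun t => 4 * phi t - (3 * t + sf t) * QQ t from rfl] using this

lemma gB_pos (t : ℝ) : 0 < gB t := by
  have h1 : gB (t + 1) < gB t := strictAnti_gB (by linarith)
  have h2 : (0:ℝ) ≤ gB (t + 1) := strictAnti_gB.antitone.le_of_tendsto tendsto_gB_atTop (t + 1)
  linarith

noncomputable def FF (t : ℝ) : ℝ :=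
  2 * phi t ^ 2 - 3 * t * phi t * QQ t + (t ^ 2 - 1) * QQ t ^ 2

lemma FF_pos (t : ℝ) : 0 < FF t := by
  have h8 : 8 * FF t = gB t * (gB t + 2 * sf t * QQ t) := by
    rw [FF, gB]
    linear_combination (QQ t)^2 * (s_sq t)
  have h1 := gB_pos t
  have h2 : 0 < gB t + 2 * sf t * QQ t := by
    have := s_pos t; have := Q_pos t; positivity
  nlinarith

noncomputable def W (t : ℝ) : ℝ := (t * phi t + QQ t) / QQ t - (phi t / QQ t) ^ 2

lemma hasDerivAt_W (t : ℝ) : HasDerivAt W (-(phi t * FF t) / QQ t ^ 3) t := by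
  have hQ := (Q_pos t).ne'
  have hnum : HasDerivAt (fun t : ℝ => t * phi t + QQ t)
      (phi t + t * (-t * phi t) + -phi t) t := by
    have := ((hasDerivAt_id t).mul (hasDerivAt_phi t)).add (hasDerivAt_Q t)
    exact this.congr_deriv (by simp only [id_eq]; ring)
  have hfrac := hnum.div (hasDerivAt_Q t) hQ
  have hpow := ((hasDerivAt_phi t).div (hasDerivAt_Q t) hQ).pow 2
  have h := hfrac.sub hpow
  refine h.congr_deriv ?_
  rw [FF, Pi.div_apply]
  simp only [Nat.reduceSub, Nat.cast_ofNat, pow_one]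
  field_simp
  ring

lemma strictAnti_W : StrictAnti W := by
  apply strictAnti_of_hasDerivAt_neg hasDerivAt_W
  intro t
  have h1 := phi_pos t
  have h2 := FF_pos t
  have h3 := Q_pos t
  apply div_neg_of_neg_of_pos
  · nlinarith
  · positivity

lemma condVar_Ioi (t : ℝ) : gaussCondVar (Set.Ioi t) = W t := by
  rw [gaussCondVar, gaussCondMean, meas_Ioi, int_id_Ioi, int_sq_Ioi, W]

lemma condVar_Iic (t : ℝ) : gaussCondVar (Set.Iic (-t)) = W t := by
  rw [gaussCondVar, gaussCondMean, meas_Iic, int_id_Iic, int_sq_Iic, W, neg_div, neg_sq]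

/-- Var(ε | ε > −ψ) is strictly increasing in ψ; by symmetry
Var(ε | ε ≤ −ψ) = Var(ε | ε > ψ); hence D(ψ) = Var(ε | ε > −ψ) − Var(ε | ε ≤ −ψ)
satisfies D(0) = 0, D(ψ) > 0 for ψ > 0 and D(ψ) < 0 for ψ < 0. -/
theorem trunc_var_monotone_and_difference_sign :
    StrictMono (fun ψ : ℝ => gaussCondVar (Set.Ioi (-ψ))) ∧
    (∀ ψ : ℝ, gaussCondVar (Set.Iic (-ψ)) = gaussCondVar (Set.Ioi ψ)) ∧
    (gaussCondVar (Set.Ioi (-(0 : ℝ))) - gaussCondVar (Set.Iic (-(0 : ℝ))) = 0) ∧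
    (∀ ψ : ℝ, 0 < ψ → 0 < gaussCondVar (Set.Ioi (-ψ)) - gaussCondVar (Set.Iic (-ψ))) ∧
    (∀ ψ : ℝ, ψ < 0 → gaussCondVar (Set.Ioi (-ψ)) - gaussCondVar (Set.Iic (-ψ)) < 0) := by
  have hIoi : ∀ ψ : ℝ, gaussCondVar (Set.Ioi (-ψ)) = W (-ψ) := fun ψ => condVar_Ioi (-ψ)
  have hIic : ∀ ψ : ℝ, gaussCondVar (Set.Iic (-ψ)) = W ψ := fun ψ => condVar_Iic ψ
  refine ⟨?_, ?_, ?_, ?_, ?_⟩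
  · intro a b hab
    simp only [hIoi]
    exact strictAnti_W (by linarith)
  · intro ψ
    rw [hIic ψ, condVar_Ioi ψ]
  · rw [hIoi 0, hIic 0, neg_zero, sub_self]
  · intro ψ hψ
    rw [hIoi ψ, hIic ψ, sub_pos]
    exact strictAnti_W (by linarith)
  · intro ψ hψ
    rw [hIoi ψ, hIic ψ, sub_neg]
    exact strictAnti_W (by linarith)
end

section
/- In the logistic nudge model with δ > 0, the baseline score θ(μ) = σ(μ) (probability of the desired choice without a nudge) is strictly increasing in μ, and the CATE β(μ) = σ(μ+δ) − σ(μ) is strictly increasing on (−∞, −δ/2). Hence, if all individuals in a population have latent means μ(x) < −δ/2, the score θ has a valid effect ordering interpretation with respect to β: θ(μ(x_i)) > θ(μ(x_j)) if and only if β(μ(x_i)) > β(μ(x_j)). -/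
/-- Logistic function σ(z) = 1/(1+e^{−z}). -/
noncomputable def sigm (z : ℝ) : ℝ := 1 / (1 + Real.exp (-z))

lemma sigm_eq (z : ℝ) : sigm z = Real.exp z / (Real.exp z + 1) := by
  unfold sigm
  rw [Real.exp_neg]
  have h := Real.exp_pos z
  field_simp

lemma sigm_strictMono : StrictMono sigm := by
  intro a b hab
  unfold sigm
  have h1 : Real.exp (-b) < Real.exp (-a) := Real.exp_lt_exp.2 (by linarith)
  have h2 : 0 < 1 + Real.exp (-b) := by positivity
  apply one_div_lt_one_div_of_lt h2
  linarith

lemma beta_mono {δ a b : ℝ} (hδ : 0 < δ) (hab : a < b) (hb : b < -δ / 2) :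
    sigm (a + δ) - sigm a < sigm (b + δ) - sigm b := by
  have ea := Real.exp_pos a
  have eb := Real.exp_pos b
  have ek := Real.exp_pos δ
  have hk : 1 < Real.exp δ := by
    have := Real.exp_lt_exp.2 hδ; simpa [Real.exp_zero] using Real.exp_lt_exp.2 hδ
  set A := Real.exp a with hA
  set B := Real.exp b with hB
  set K := Real.exp δ with hK
  have hBlt : B < Real.exp (-δ / 2) := Real.exp_lt_exp.2 hb
  have hAB : A < B := Real.exp_lt_exp.2 hab
  have hsq : Real.exp (-δ / 2) * Real.exp (-δ / 2) = 1 / K := by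
    rw [← Real.exp_add, show -δ / 2 + -δ / 2 = -δ by ring, Real.exp_neg, one_div, hK]
  have hKAB : K * (A * B) < 1 := by
    have h1 : A * B < Real.exp (-δ / 2) * Real.exp (-δ / 2) := by
      nlinarith [Real.exp_pos (-δ / 2)]
    have h2 : A * B < 1 / K := by rw [← hsq]; exact h1
    calc K * (A * B) < K * (1 / K) := by
          exact (mul_lt_mul_iff_right₀ ek).2 h2
      _ = 1 := by field_simp
  have key : A * (K - 1) / ((A * K + 1) * (A + 1)) < B * (K - 1) / ((B * K + 1) * (B + 1)) := by
    rw [div_lt_div_iff₀ (by positivity) (by positivity)]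
    nlinarith [mul_pos (mul_pos (sub_pos.2 hk) (sub_pos.2 hAB)) (sub_pos.2 hKAB), mul_pos ea eb]
  have eA : sigm (a + δ) - sigm a = A * (K - 1) / ((A * K + 1) * (A + 1)) := by
    rw [sigm_eq, sigm_eq, Real.exp_add, ← hA, ← hK]
    field_simp
    ring
  have eB : sigm (b + δ) - sigm b = B * (K - 1) / ((B * K + 1) * (B + 1)) := by
    rw [sigm_eq, sigm_eq, Real.exp_add, ← hB, ← hK]
    field_simp
    ring
  rw [eA, eB]; exact key

/-- the baseline score θ = σ is strictly increasing, the CATE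
β(μ) = σ(μ+δ) − σ(μ) is strictly increasing on (−∞, −δ/2), and hence if all latent
means satisfy μ(x) < −δ/2, the baseline score has a valid effect ordering
interpretation with respect to the CATE. -/
theorem baseline_score_eo_below_threshold {X : Type*} (δ : ℝ) (hδ : 0 < δ)
    (θ β : ℝ → ℝ) (hθ : ∀ z, θ z = sigm z)
    (hβ : ∀ μ, β μ = sigm (μ + δ) - sigm μ)
    (μf : X → ℝ) (hμ : ∀ x, μf x < -δ / 2) :
    StrictMono θ ∧
    StrictMonoOn β (Set.Iio (-δ / 2)) ∧
    (∀ xi xj : X, θ (μf xi) > θ (μf xj) ↔ β (μf xi) > β (μf xj)) := by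
  have hθm : StrictMono θ := by
    intro a b hab
    rw [hθ, hθ]; exact sigm_strictMono hab
  have hβm : StrictMonoOn β (Set.Iio (-δ / 2)) := by
    intro a _ b hb hab
    rw [hβ, hβ]
    exact beta_mono hδ hab hb
  refine ⟨hθm, hβm, fun xi xj => ?_⟩
  constructor
  · intro h
    exact hβm (hμ xj) (hμ xi) (hθm.lt_iff_lt.1 h)
  · intro h
    by_contra hc
    push_neg at hc
    rcases lt_or_eq_of_le hc with h' | h'
    · exact absurd (hβm (hμ xi) (hμ xj) (hθm.lt_iff_lt.1 h')) (by linarith)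
    · have : μf xi = μf xj := hθm.injective h'
      rw [this] at h; exact lt_irrefl _ h
end

section
/- Let T = 1{U > 0} with U = ψ(X) + ε_u, ε_u independent of X, and let Y^0 = ζ(X) + ε_y, C = β(X) + ε_c with E[ε_y | ε_u] = α_y ε_u and E[ε_c | ε_u] = α_c ε_u (both independent of X given ε_u). Then the confounded score θ(x) = E[Y | T=1, X=x] − E[Y | T=0, X=x], where Y = Y^0 + T·C, decomposes as θ(x) = β(x) + α_c E[ε_u | ε_u > −ψ(x)] + α_y (E[ε_u | ε_u > −ψ(x)] − E[ε_u | ε_u ≤ −ψ(x)]). -/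
open MeasureTheory ProbabilityTheory

/-- decomposition of the confounded score (conditional on X = x, with
baseline ζ(x), effect β(x), utility index ψ(x)): with T = 1{ε_u > −ψ(x)},
Y = Y⁰ + T·C, E[ε_y | ε_u] = α_y ε_u and E[ε_c | ε_u] = α_c ε_u,
θ(x) = β(x) + α_c E[ε_u | ε_u > −ψ(x)] + α_y (E[ε_u | ε_u > −ψ(x)] − E[ε_u | ε_u ≤ −ψ(x)]). -/
theorem confounded_score_decomposition
    {Ω : Type*} [MeasurableSpace Ω] (P : Measure Ω) [IsProbabilityMeasure P]
    (epsu epsy epsc : Ω → ℝ) (hmu : Measurable epsu)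
    (hintu : Integrable epsu P) (hinty : Integrable epsy P) (hintc : Integrable epsc P)
    (αy αc : ℝ)
    (hcy : P[epsy | MeasurableSpace.comap epsu inferInstance] =ᵐ[P] fun ω => αy * epsu ω)
    (hcc : P[epsc | MeasurableSpace.comap epsu inferInstance] =ᵐ[P] fun ω => αc * epsu ω)
    (ζx βx ψx : ℝ)
    (hpos1 : 0 < P {ω | epsu ω > -ψx}) (hpos2 : 0 < P {ω | epsu ω ≤ -ψx})
    (Y : Ω → ℝ)
    (hY : ∀ ω, Y ω = (ζx + epsy ω) + (if epsu ω > -ψx then 1 else 0) * (βx + epsc ω)) :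
    (∫ ω in {ω | epsu ω > -ψx}, Y ω ∂P) / (P {ω | epsu ω > -ψx}).toReal -
      (∫ ω in {ω | epsu ω ≤ -ψx}, Y ω ∂P) / (P {ω | epsu ω ≤ -ψx}).toReal =
    βx + αc * ((∫ ω in {ω | epsu ω > -ψx}, epsu ω ∂P) / (P {ω | epsu ω > -ψx}).toReal) +
      αy * ((∫ ω in {ω | epsu ω > -ψx}, epsu ω ∂P) / (P {ω | epsu ω > -ψx}).toReal -
        (∫ ω in {ω | epsu ω ≤ -ψx}, epsu ω ∂P) / (P {ω | epsu ω ≤ -ψx}).toReal) := by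
  classical
  have hm : MeasurableSpace.comap epsu inferInstance ≤ ‹MeasurableSpace Ω› := hmu.comap_le
  set A := {ω | epsu ω > -ψx} with hAdef
  set B := {ω | epsu ω ≤ -ψx} with hBdef
  have hAm : MeasurableSet[MeasurableSpace.comap epsu inferInstance] A := ⟨Set.Ioi (-ψx), measurableSet_Ioi, rfl⟩
  have hBm : MeasurableSet[MeasurableSpace.comap epsu inferInstance] B := ⟨Set.Iic (-ψx), measurableSet_Iic, rfl⟩
  have hA : MeasurableSet A := hm _ hAm
  have hB : MeasurableSet B := hm _ hBm
  have key : ∀ (f : Ω → ℝ) (α : ℝ), Integrable f P →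
      (P[f | MeasurableSpace.comap epsu inferInstance] =ᵐ[P] fun ω => α * epsu ω) → ∀ S : Set Ω, MeasurableSet[MeasurableSpace.comap epsu inferInstance] S →
      ∫ ω in S, f ω ∂P = α * ∫ ω in S, epsu ω ∂P := by
    intro f α hint hce S hS
    calc ∫ ω in S, f ω ∂P = ∫ ω in S, (P[f | MeasurableSpace.comap epsu inferInstance]) ω ∂P := (setIntegral_condExp hm hint hS).symm
      _ = ∫ ω in S, α * epsu ω ∂P := integral_congr_ae (ae_restrict_of_ae hce)
      _ = α * ∫ ω in S, epsu ω ∂P := integral_const_mul _ _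
  have hya := key epsy αy hinty hcy A hAm
  have hyb := key epsy αy hinty hcy B hBm
  have hca := key epsc αc hintc hcc A hAm
  have hIA : ∫ ω in A, Y ω ∂P
      = (ζx + βx) * (P A).toReal + (αy * ∫ ω in A, epsu ω ∂P + αc * ∫ ω in A, epsu ω ∂P) := by
    have h1 : ∫ ω in A, Y ω ∂P = ∫ ω in A, ((ζx + βx) + (epsy ω + epsc ω)) ∂P := by
      refine setIntegral_congr_fun hA fun ω hω => ?_
      have : epsu ω > -ψx := hω
      rw [hY ω, if_pos this]; ring
    have e1 : ∫ ω in A, ((ζx + βx) + (epsy ω + epsc ω)) ∂P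
        = (∫ _ω in A, (ζx + βx) ∂P) + ∫ ω in A, (epsy ω + epsc ω) ∂P :=
      integral_add (integrableOn_const (measure_ne_top P A))
        (hinty.integrableOn.add hintc.integrableOn)
    have e2 : ∫ ω in A, (epsy ω + epsc ω) ∂P
        = (∫ ω in A, epsy ω ∂P) + ∫ ω in A, epsc ω ∂P :=
      integral_add hinty.integrableOn hintc.integrableOn
    rw [h1, e1, e2, setIntegral_const, hya, hca]
    simp [smul_eq_mul, mul_comm, Measure.real]
  have hIB : ∫ ω in B, Y ω ∂P = ζx * (P B).toReal + αy * ∫ ω in B, epsu ω ∂P := by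
    have h1 : ∫ ω in B, Y ω ∂P = ∫ ω in B, (ζx + epsy ω) ∂P := by
      refine setIntegral_congr_fun hB fun ω hω => ?_
      have h2 : ¬ epsu ω > -ψx := not_lt.2 hω
      rw [hY ω, if_neg h2]; ring
    have e1 : ∫ ω in B, (ζx + epsy ω) ∂P
        = (∫ _ω in B, ζx ∂P) + ∫ ω in B, epsy ω ∂P :=
      integral_add (integrableOn_const (measure_ne_top P B))
        hinty.integrableOn
    rw [h1, e1, setIntegral_const, hyb]
    simp [smul_eq_mul, mul_comm, Measure.real]
  have ha : (P A).toReal ≠ 0 := (ENNReal.toReal_pos hpos1.ne' (measure_ne_top P A)).ne'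
  have hb : (P B).toReal ≠ 0 := (ENNReal.toReal_pos hpos2.ne' (measure_ne_top P B)).ne'
  rw [hIA, hIB]
  field_simp
  ring
end
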